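/- arXiv:1005.3968 — 2 statements merged into one kernel-verified Lean document; each statement's English description precedes it below -/
import Mathlib

section
/- Let p be prime, A a symmetric (n+k)×(n+k) matrix over F_p with rows/columns indexed by X ∪ Y (|X| = k, |Y| = n) and with zero diagonal blocks A_{XX} = 0. Define f : (C^p)^{⊗k} → (C^p)^{⊗n} on basis states by f(|d^X⟩) = p^{-n/2} Σ_{d^Y ∈ F_p^n} e^{(2πi/p)·q(d^X,d^Y)} |d^Y⟩, where q(d^X,d^Y) = (d^X)^t A_{XY} d^Y + ½ (d^Y)^t A_{YY} d^Y (the quadratic form of A restricted to zero-diagonal symmetric matrices, well defined over F_p for p odd). If the matrix A_{XY} ∈ F_p^{k×n} has rank k, then f is an isometry (in particular injective), so its image is a p^k-dimensional subspace of (C^p)^{⊗n}. -/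
open Finset Complex Matrix

section chi
variable (p : ℕ) [NeZero p]

noncomputable def gcChi : AddChar (ZMod p) ℂ :=
  AddChar.zmodChar p ((Complex.isPrimitiveRoot_exp p (NeZero.ne p)).pow_eq_one)

lemma gcChi_apply (a : ZMod p) :
    gcChi p a = Complex.exp (2 * Real.pi * Complex.I * (a.val : ℕ) / p) := by
  rw [gcChi, AddChar.zmodChar_apply, ← Complex.exp_nat_mul]
  congr 1
  ring

lemma gcChi_conj (a : ZMod p) : (starRingEnd ℂ) (gcChi p a) = gcChi p (-a) := by
  rw [AddChar.map_neg_eq_inv, gcChi_apply, ← Complex.exp_conj, ← Complex.exp_neg]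
  congr 1
  simp only [map_div₀, _root_.map_mul, Complex.conj_I, Complex.conj_natCast, Complex.conj_ofReal, map_ofNat]
  ring
end chi

section prime
variable (p : ℕ) [Fact p.Prime]

lemma gcChi_ne_one : gcChi p ≠ 1 := by
  haveI : Fact (1 < p) := ⟨(Fact.out : p.Prime).one_lt⟩
  rw [AddChar.zmod_char_ne_one_iff]
  rw [gcChi, AddChar.zmodChar_apply, ZMod.val_one, pow_one]
  exact (Complex.isPrimitiveRoot_exp p (NeZero.ne p)).ne_one (Fact.out : p.Prime).one_lt

lemma gcChi_sum_mul (c : ZMod p) :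
    ∑ a : ZMod p, gcChi p (c * a) = if c = 0 then (p : ℂ) else 0 := by
  split_ifs with hc
  · simp [hc, ZMod.card]
  · rw [← AddChar.sum_eq_zero_of_ne_one (gcChi_ne_one p)]
    exact Fintype.sum_equiv (Equiv.mulLeft₀ c hc) _ _ fun a => rfl

lemma gcChi_map_sum {ι : Type*} (s : Finset ι) (g : ι → ZMod p) :
    gcChi p (∑ i ∈ s, g i) = ∏ i ∈ s, gcChi p (g i) := by
  induction s using Finset.cons_induction with
  | empty => simp
  | cons a s ha ih => rw [Finset.sum_cons, Finset.prod_cons, AddChar.map_add_eq_mul, ih]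

lemma gcChi_pi_sum (n : ℕ) (w : Fin n → ZMod p) :
    ∑ dY : Fin n → ZMod p, gcChi p (∑ j, w j * dY j) =
      if w = 0 then ((p : ℂ)) ^ n else 0 := by
  have h1 : ∑ dY : Fin n → ZMod p, gcChi p (∑ j, w j * dY j)
      = ∏ j : Fin n, ∑ a : ZMod p, gcChi p (w j * a) := by
    rw [Finset.prod_univ_sum]
    rw [Fintype.piFinset_univ]
    exact Finset.sum_congr rfl fun dY _ => gcChi_map_sum p _ _
  rw [h1]
  split_ifs with hw
  · subst hw
    simp [ZMod.card]
  · obtain ⟨j, hj⟩ := Function.ne_iff.mp hw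
    refine Finset.prod_eq_zero (Finset.mem_univ j) ?_
    rw [gcChi_sum_mul]
    exact if_neg (by simpa using hj)

end prime

open Module in
lemma vecMul_inj {p k n : ℕ} [Fact p.Prime] (AXY : Matrix (Fin k) (Fin n) (ZMod p))
    (hrank : AXY.rank = k) :
    Function.Injective (fun x : Fin k → ZMod p => Matrix.vecMul x AXY) := by
  have h1 : (AXY)ᵀ.rank = k := by rw [Matrix.rank_transpose]; exact hrank
  set g := (AXY)ᵀ.mulVecLin with hg
  have hdom : finrank (ZMod p) (Fin k → ZMod p) = k := by simp
  have hr : finrank (ZMod p) (LinearMap.range g) = k := h1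
  have hadd := LinearMap.finrank_range_add_finrank_ker g
  rw [hdom, hr] at hadd
  have hker : LinearMap.ker g = ⊥ :=
    Submodule.finrank_eq_zero.mp (by omega)
  have hinj := LinearMap.ker_eq_bot.mp hker
  intro x y hxy
  apply hinj
  show (AXY)ᵀ.mulVec x = (AXY)ᵀ.mulVec y
  rw [Matrix.mulVec_transpose, Matrix.mulVec_transpose]
  exact hxy


/-- For `p` an odd prime and a symmetric interaction matrix with `A_{XX} = 0`, the
graph-code encoding map `f(|d^X⟩) = p^{-n/2} Σ_{d^Y} e^{(2πi/p) q(d^X,d^Y)} |d^Y⟩` is an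
isometry (in particular injective) whenever the block `A_{XY}` has rank `k`; its image is
a `p^k`-dimensional subspace of `(ℂ^p)^{⊗n}`. -/
theorem graph_code_isometry (p : ℕ) [Fact p.Prime] (hp : p ≠ 2) (k n : ℕ)
    (AXY : Matrix (Fin k) (Fin n) (ZMod p)) (AYY : Matrix (Fin n) (Fin n) (ZMod p))
    (hsymm : AYY.IsSymm) (hdiag : ∀ i, AYY i i = 0)
    (hrank : AXY.rank = k)
    (q : (Fin k → ZMod p) → (Fin n → ZMod p) → ZMod p)
    (hq : ∀ dX dY, q dX dY = (∑ i, ∑ j, dX i * AXY i j * dY j) +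
      (2 : ZMod p)⁻¹ * ∑ i, ∑ j, dY i * AYY i j * dY j)
    (f : EuclideanSpace ℂ (Fin k → ZMod p) → EuclideanSpace ℂ (Fin n → ZMod p))
    (hf : ∀ v dY, f v dY = (((p : ℝ) ^ (-(n : ℝ) / 2) : ℝ) : ℂ) *
      ∑ dX : Fin k → ZMod p,
        Complex.exp (2 * Real.pi * Complex.I * ((q dX dY).val : ℕ) / p) * v dX) :
    (∀ v, ‖f v‖ = ‖v‖) ∧ Function.Injective f ∧
    Module.finrank ℂ (Submodule.span ℂ (Set.range f)) = p ^ k := by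
  classical
  set c : ℝ := (p : ℝ) ^ (-(n : ℝ) / 2) with hc
  have hfχ : ∀ v dY, f v dY = (c : ℂ) * ∑ dX : Fin k → ZMod p, gcChi p (q dX dY) * v dX := by
    intro v dY
    rw [hf]
    congr 1
    exact Finset.sum_congr rfl fun dX _ => by rw [gcChi_apply]
  -- the difference of quadratic forms is linear
  have hq_sub : ∀ (dX dX' : Fin k → ZMod p) (dY : Fin n → ZMod p),
      q dX dY - q dX' dY = ∑ j, (∑ i, (dX i - dX' i) * AXY i j) * dY j := by
    intro dX dX' dY
    have hswap : ∀ u : Fin k → ZMod p,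
        (∑ i, ∑ j, u i * AXY i j * dY j) = ∑ j, (∑ i, u i * AXY i j) * dY j := by
      intro u
      rw [Finset.sum_comm]
      exact Finset.sum_congr rfl fun j _ => by rw [Finset.sum_mul]
    rw [hq, hq, add_sub_add_right_eq_sub, hswap, hswap, ← Finset.sum_sub_distrib]
    exact Finset.sum_congr rfl fun j _ => by
      rw [← sub_mul, ← Finset.sum_sub_distrib]
      congr 1
      exact Finset.sum_congr rfl fun i _ => by rw [sub_mul]
  have hinjW := vecMul_inj AXY hrank
  -- orthogonality of the rows
  have horth : ∀ dX dX' : Fin k → ZMod p,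
      (∑ dY : Fin n → ZMod p, gcChi p (q dX dY) * (starRingEnd ℂ) (gcChi p (q dX' dY)))
        = if dX = dX' then ((p : ℂ)) ^ n else 0 := by
    intro dX dX'
    have h1 : ∀ dY : Fin n → ZMod p,
        gcChi p (q dX dY) * (starRingEnd ℂ) (gcChi p (q dX' dY))
          = gcChi p (∑ j, (∑ i, (dX i - dX' i) * AXY i j) * dY j) := by
      intro dY
      rw [gcChi_conj, ← AddChar.map_add_eq_mul, ← sub_eq_add_neg, hq_sub]
    rw [Finset.sum_congr rfl fun dY _ => h1 dY, gcChi_pi_sum]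
    have hcond : ((fun j => ∑ i, (dX i - dX' i) * AXY i j) = 0) ↔ dX = dX' := by
      have hw : (fun j => ∑ i, (dX i - dX' i) * AXY i j) = Matrix.vecMul (dX - dX') AXY := by
        funext j
        simp [Matrix.vecMul, dotProduct]
      rw [hw]
      constructor
      · intro h
        have h2 : Matrix.vecMul (dX - dX') AXY = Matrix.vecMul 0 AXY := by
          rw [h, Matrix.zero_vecMul]
        have := hinjW h2
        rwa [sub_eq_zero] at this
      · rintro rfl
        rw [sub_self, Matrix.zero_vecMul]
    by_cases h : dX = dX'
    · rw [if_pos (hcond.mpr h), if_pos h]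
    · rw [if_neg (fun hh => h (hcond.mp hh)), if_neg h]
  -- normalization constant
  have hp0 : (0 : ℝ) < p := by exact_mod_cast (Fact.out : p.Prime).pos
  have hC : (c : ℂ) * (c : ℂ) * ((p : ℂ)) ^ n = 1 := by
    have hr : c * c * (p : ℝ) ^ n = 1 := by
      rw [hc, ← Real.rpow_natCast (p : ℝ) n, ← Real.rpow_add hp0, ← Real.rpow_add hp0]
      norm_num
    calc (c : ℂ) * (c : ℂ) * ((p : ℂ)) ^ n = ((c * c * (p : ℝ) ^ n : ℝ) : ℂ) := by push_cast; ring
    _ = 1 := by rw [hr]; norm_num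
  -- the key Parseval identity
  have key : ∀ v : EuclideanSpace ℂ (Fin k → ZMod p),
      ∑ dY : Fin n → ZMod p, f v dY * (starRingEnd ℂ) (f v dY)
        = ∑ dX : Fin k → ZMod p, v dX * (starRingEnd ℂ) (v dX) := by
    intro v
    have step1 : ∀ dY : Fin n → ZMod p, f v dY * (starRingEnd ℂ) (f v dY)
        = (c : ℂ) * (c : ℂ) * ∑ dX : Fin k → ZMod p, ∑ dX' : Fin k → ZMod p,
            (v dX * (starRingEnd ℂ) (v dX')) *
              (gcChi p (q dX dY) * (starRingEnd ℂ) (gcChi p (q dX' dY))) := by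
      intro dY
      rw [hfχ]
      rw [_root_.map_mul]
      rw [map_sum (starRingEnd ℂ) _ Finset.univ]
      rw [Complex.conj_ofReal]
      rw [mul_mul_mul_comm]
      rw [Finset.sum_mul_sum]
      rw [Finset.mul_sum]
      rw [← Finset.mul_sum]
      congr 1
      refine Finset.sum_congr rfl fun dX _ => ?_
      refine Finset.sum_congr rfl fun dX' _ => ?_
      rw [_root_.map_mul]
      ring
    calc ∑ dY : Fin n → ZMod p, f v dY * (starRingEnd ℂ) (f v dY)
        = (c : ℂ) * (c : ℂ) * ∑ dX : Fin k → ZMod p, ∑ dX' : Fin k → ZMod p,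
            (v dX * (starRingEnd ℂ) (v dX')) *
              ∑ dY : Fin n → ZMod p, gcChi p (q dX dY) * (starRingEnd ℂ) (gcChi p (q dX' dY)) := by
          rw [Finset.sum_congr rfl fun dY _ => step1 dY, ← Finset.mul_sum]
          congr 1
          rw [Finset.sum_comm]
          refine Finset.sum_congr rfl fun dX _ => ?_
          rw [Finset.sum_comm]
          refine Finset.sum_congr rfl fun dX' _ => ?_
          rw [Finset.mul_sum]
      _ = ∑ dX : Fin k → ZMod p, v dX * (starRingEnd ℂ) (v dX) := by
          rw [Finset.sum_congr rfl fun dX _ => Finset.sum_congr rfl fun dX' _ => by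
            rw [horth dX dX']]
          have : ∀ dX : Fin k → ZMod p, ∑ dX' : Fin k → ZMod p,
              (v dX * (starRingEnd ℂ) (v dX')) * (if dX = dX' then ((p:ℂ))^n else 0)
                = (v dX * (starRingEnd ℂ) (v dX)) * ((p:ℂ))^n := by
            intro dX
            rw [Finset.sum_eq_single dX]
            · rw [if_pos rfl]
            · intro b _ hb
              rw [if_neg (fun hh => hb hh.symm), mul_zero]
            · intro h
              exact absurd (Finset.mem_univ dX) h
          rw [Finset.sum_congr rfl fun dX _ => this dX, ← Finset.sum_mul, ← mul_assoc,
            mul_comm ((c:ℂ) * (c:ℂ)), mul_assoc, hC, mul_one]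
  -- norm preservation
  have hnorm : ∀ v, ‖f v‖ = ‖v‖ := by
    intro v
    rw [EuclideanSpace.norm_eq, EuclideanSpace.norm_eq]
    congr 1
    have h := key v
    simp only [Complex.mul_conj] at h
    have h2 : ((∑ dY : Fin n → ZMod p, Complex.normSq (f v dY) : ℝ) : ℂ)
        = ((∑ dX : Fin k → ZMod p, Complex.normSq (v dX) : ℝ) : ℂ) := by
      push_cast
      exact h
    have h3 := Complex.ofReal_inj.mp h2
    calc ∑ dY : Fin n → ZMod p, ‖f v dY‖ ^ 2
        = ∑ dY : Fin n → ZMod p, Complex.normSq (f v dY) := by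
          exact Finset.sum_congr rfl fun dY _ => by
            rw [← Complex.sq_norm]
      _ = ∑ dX : Fin k → ZMod p, Complex.normSq (v dX) := h3
      _ = ∑ dX : Fin k → ZMod p, ‖v dX‖ ^ 2 := by
          exact Finset.sum_congr rfl fun dX _ => by
            rw [← Complex.sq_norm]
  -- linearity
  have hadd : ∀ u w, f (u + w) = f u + f w := by
    intro u w
    refine PiLp.ext fun dY => ?_
    have h1 : (f u + f w) dY = f u dY + f w dY := rfl
    rw [h1, hf, hf, hf]
    have h2 : ∀ dX : Fin k → ZMod p, (u + w) dX = u dX + w dX := fun _ => rfl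
    simp only [h2, mul_add, Finset.sum_add_distrib]
  have hsmul : ∀ (a : ℂ) v, f (a • v) = a • f v := by
    intro a v
    refine PiLp.ext fun dY => ?_
    have h1 : (a • f v) dY = a * f v dY := rfl
    have h2 : ∀ dX : Fin k → ZMod p, (a • v) dX = a * v dX := fun _ => rfl
    rw [h1, hf, hf]
    simp only [h2]
    have h3 : ∑ dX : Fin k → ZMod p,
        Complex.exp (2 * Real.pi * Complex.I * ((q dX dY).val : ℕ) / p) * (a * v dX)
          = a * ∑ dX : Fin k → ZMod p,
            Complex.exp (2 * Real.pi * Complex.I * ((q dX dY).val : ℕ) / p) * v dX := by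
      rw [Finset.mul_sum]
      exact Finset.sum_congr rfl fun dX _ => by ring
    rw [h3]
    ring
  have hsub : ∀ u w, f (u - w) = f u - f w := by
    intro u w
    rw [sub_eq_add_neg, ← neg_one_smul ℂ w, hadd, hsmul, neg_one_smul, ← sub_eq_add_neg]
  have hinj : Function.Injective f := by
    intro u w h
    have h0 : ‖u - w‖ = 0 := by rw [← hnorm (u - w), hsub, h, sub_self, norm_zero]
    exact sub_eq_zero.mp (norm_eq_zero.mp h0)
  refine ⟨hnorm, hinj, ?_⟩
  let L : EuclideanSpace ℂ (Fin k → ZMod p) →ₗ[ℂ] EuclideanSpace ℂ (Fin n → ZMod p) :=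
    { toFun := f, map_add' := hadd, map_smul' := hsmul }
  have hcoe : ⇑L = f := rfl
  have h1 : Submodule.span ℂ (Set.range f) = LinearMap.range L := by
    rw [← hcoe, ← LinearMap.coe_range, Submodule.span_eq]
  rw [h1, LinearMap.finrank_range_of_inj (hcoe ▸ hinj), finrank_euclideanSpace]
  simp [Fintype.card_fun, ZMod.card]
end

section
/- Define the map T on (C^p)^{⊗Y} by T(|d^Y⟩) = p^{-(|L|+|X|)/2} Σ_{d^L ∈ F_p^{|L|}} Σ_{d^X ∈ F_p^{|X|}} e^{−(2πi/p)·μ(d^X,d^Y,d^L)} |d^L d^X⟩, where μ = ½ (d^X,d^Y,d^L)^t Ā (d^X,d^Y,d^L) for a symmetric matrix Ā over F_p (p odd) with zero blocks Ā_{XX} = Ā_{LL} = Ā_{XL} = 0 and |X| + |L| = |Y|. If the block Ā_{(X∪L),Y} is invertible over F_p, then T is a unitary map from (C^p)^{⊗Y} onto (C^p)^{⊗(L∪X)}. -/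
open Matrix Finset

namespace GraphCodeAux

variable {p : ℕ} [Fact p.Prime]

/-- The character `z ↦ exp(-2πi z.val / p)`. -/
noncomputable def e (p : ℕ) [NeZero p] : AddChar (ZMod p) ℂ :=
  (ZMod.stdAddChar).compAddMonoidHom (negAddMonoidHom)

lemma e_apply (z : ZMod p) :
    e p z = Complex.exp (-(2 * Real.pi * Complex.I * ((z.val : ℕ) : ℂ) / p)) := by
  have h : (-z : ZMod p) = ((-(z.val : ℤ) : ℤ) : ZMod p) := by
    push_cast
    rw [ZMod.natCast_val, ZMod.cast_id]
  show ZMod.stdAddChar (-z) = _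
  rw [h, ZMod.stdAddChar_coe]
  push_cast
  ring_nf

lemma e_ne_zero (z : ZMod p) : e p z ≠ 0 := by
  rw [e_apply]; exact Complex.exp_ne_zero _

lemma e_conj (z : ZMod p) : (starRingEnd ℂ) (e p z) = e p (-z) := by
  have h1 : e p (-z) * e p z = 1 := by
    rw [← AddChar.map_add_eq_mul]; simp
  have h2 : (starRingEnd ℂ) (e p z) * e p z = 1 := by
    have harg : -(2 * (Real.pi : ℂ) * Complex.I * ((z.val : ℕ) : ℂ) / (p : ℂ)) =
        ((-(2 * Real.pi * (z.val : ℝ) / (p : ℝ)) : ℝ) : ℂ) * Complex.I := by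
      push_cast; ring
    rw [Complex.conj_mul', e_apply, harg,
      Complex.norm_exp_ofReal_mul_I]
    norm_num
  exact mul_right_cancel₀ (e_ne_zero z) (h2.trans h1.symm)

lemma e_map_sum {ι : Type*} (s : Finset ι) (f : ι → ZMod p) :
    e p (∑ i ∈ s, f i) = ∏ i ∈ s, e p (f i) := by
  classical
  induction s using Finset.induction_on with
  | empty => simp
  | insert a s h ih =>
      rw [Finset.sum_insert h, Finset.prod_insert h, AddChar.map_add_eq_mul, ih]

lemma e_isPrimitive : AddChar.IsPrimitive (e p) := by
  intro a ha
  have h : AddChar.mulShift (e p) a = AddChar.mulShift (ZMod.stdAddChar) (-a) := by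
    ext x
    show ZMod.stdAddChar (-(a * x)) = ZMod.stdAddChar (-a * x)
    rw [neg_mul]
  rw [h]
  exact ZMod.isPrimitive_stdAddChar p (neg_ne_zero.mpr ha)

lemma sum_e_mul (v : ZMod p) :
    ∑ x : ZMod p, e p (x * v) = if v = 0 then (p : ℂ) else 0 := by
  have h := AddChar.sum_mulShift v (e_isPrimitive (p := p))
  rw [ZMod.card] at h
  rw [h]
  split_ifs <;> simp

lemma sum_e_dot {α : Type*} [Fintype α] [DecidableEq α] (v : α → ZMod p) :
    ∑ g : α → ZMod p, e p (g ⬝ᵥ v) =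
      if v = 0 then ((p : ℂ) ^ Fintype.card α) else 0 := by
  have h1 : ∑ g : α → ZMod p, e p (g ⬝ᵥ v) = ∏ a : α, ∑ x : ZMod p, e p (x * v a) := by
    rw [Finset.prod_univ_sum]
    simp only [Fintype.piFinset_univ]
    exact (Finset.sum_congr rfl fun g _ => by rw [dotProduct, e_map_sum]).symm
  rw [h1]
  by_cases hv : v = 0
  · simp [hv, sum_e_mul, Finset.card_univ]
  · obtain ⟨a, ha⟩ := Function.ne_iff.mp hv
    rw [if_neg hv]
    refine Finset.prod_eq_zero (Finset.mem_univ a) ?_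
    rw [sum_e_mul, if_neg]
    simpa using ha

end GraphCodeAux

open GraphCodeAux

/-- The inverse-quantum-Fourier-transform decoding operator
`T(|d^Y⟩) = p^{-(|L|+|X|)/2} Σ_{d^L,d^X} e^{−(2πi/p) μ(d^X,d^Y,d^L)} |d^L d^X⟩`, with
`μ = ½ (d^X,d^Y,d^L)ᵀ Ā (d^X,d^Y,d^L)` for a symmetric `Ā` over `F_p` (`p` odd) with
`Ā_{XX} = Ā_{LL} = Ā_{XL} = 0` and `|X| + |L| = |Y|`, is unitary from `(ℂ^p)^{⊗Y}` onto
`(ℂ^p)^{⊗(L∪X)}` whenever the block `Ā_{(X∪L),Y}` is invertible over `F_p`. -/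
theorem graph_code_decoder_unitary (p : ℕ) [Fact p.Prime] (hp : p ≠ 2)
    (X Y L : Type) [Fintype X] [Fintype Y] [Fintype L]
    [DecidableEq X] [DecidableEq Y] [DecidableEq L]
    (hcard : Fintype.card X + Fintype.card L = Fintype.card Y)
    (A : Matrix (X ⊕ Y ⊕ L) (X ⊕ Y ⊕ L) (ZMod p)) (hA : A.IsSymm)
    (hXX : ∀ x x', A (Sum.inl x) (Sum.inl x') = 0)
    (hLL : ∀ l l', A (Sum.inr (Sum.inr l)) (Sum.inr (Sum.inr l')) = 0)
    (hXL : ∀ x l, A (Sum.inl x) (Sum.inr (Sum.inr l)) = 0)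
    (B : Matrix (X ⊕ L) Y (ZMod p))
    (hB : ∀ xl y, B xl y =
      A (Sum.elim Sum.inl (Sum.inr ∘ Sum.inr) xl) (Sum.inr (Sum.inl y)))
    (hinv : ∃ C : Matrix Y (X ⊕ L) (ZMod p), B * C = 1 ∧ C * B = 1)
    (μ : (X → ZMod p) → (Y → ZMod p) → (L → ZMod p) → ZMod p)
    (hμ : ∀ dX dY dL, μ dX dY dL = (2 : ZMod p)⁻¹ *
      (Sum.elim dX (Sum.elim dY dL) ⬝ᵥ A.mulVec (Sum.elim dX (Sum.elim dY dL))))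
    (T : EuclideanSpace ℂ (Y → ZMod p) → EuclideanSpace ℂ (X ⊕ L → ZMod p))
    (hT : ∀ ψ g, T ψ g =
      (((p : ℝ) ^ (-((Fintype.card L : ℝ) + (Fintype.card X : ℝ)) / 2) : ℝ) : ℂ) *
      ∑ dY : Y → ZMod p,
        Complex.exp (-(2 * Real.pi * Complex.I *
          ((μ (fun x => g (Sum.inl x)) dY (fun l => g (Sum.inr l))).val : ℕ) / p)) *
          ψ dY) :
    (∀ ψ φ : EuclideanSpace ℂ (Y → ZMod p), (inner ℂ (T ψ) (T φ) : ℂ) = inner ℂ ψ φ) ∧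
    Function.Bijective T := by
  classical
  obtain ⟨C, hBC, hCB⟩ := hinv
  -- 2 is invertible in ZMod p
  have hp2 : (2 : ZMod p) ≠ 0 := by
    intro h
    have h2 : (p : ℕ) ∣ 2 := by
      rwa [show ((2 : ZMod p)) = ((2 : ℕ) : ZMod p) by push_cast; ring,
        ZMod.natCast_eq_zero_iff] at h
    exact hp ((Nat.prime_dvd_prime_iff_eq (Fact.out) Nat.prime_two).mp h2)
  -- symmetric entries
  have hYX : ∀ y x, A (Sum.inr (Sum.inl y)) (Sum.inl x) = A (Sum.inl x) (Sum.inr (Sum.inl y)) :=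
    fun y x => hA.apply _ _
  have hLX : ∀ l x, A (Sum.inr (Sum.inr l)) (Sum.inl x) = 0 := fun l x => by
    rw [hA.apply]; exact hXL x l
  have hYL : ∀ y l, A (Sum.inr (Sum.inl y)) (Sum.inr (Sum.inr l)) =
      A (Sum.inr (Sum.inr l)) (Sum.inr (Sum.inl y)) := fun y l => (hA.apply _ _).symm
  -- quadratic form on Y
  set q : (Y → ZMod p) → ZMod p := fun dY => (2 : ZMod p)⁻¹ *
    ∑ y, dY y * ∑ y', A (Sum.inr (Sum.inl y)) (Sum.inr (Sum.inl y')) * dY y' with hq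
  -- key decomposition
  have key : ∀ (dX : X → ZMod p) (dY : Y → ZMod p) (dL : L → ZMod p),
      μ dX dY dL = Sum.elim dX dL ⬝ᵥ B.mulVec dY + q dY := by
    intro dX dY dL
    have expand : Sum.elim dX (Sum.elim dY dL) ⬝ᵥ
        A.mulVec (Sum.elim dX (Sum.elim dY dL)) =
        2 * (Sum.elim dX dL ⬝ᵥ B.mulVec dY) +
        ∑ y, dY y * ∑ y', A (Sum.inr (Sum.inl y)) (Sum.inr (Sum.inl y')) * dY y' := by
      simp only [dotProduct, mulVec, Fintype.sum_sum_type, Sum.elim_inl, Sum.elim_inr,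
        hXX, hLL, hXL, hLX, hYX, hYL, hB, Sum.elim_comp_inl_inr, Function.comp,
        zero_mul, mul_zero, Finset.sum_const_zero, add_zero, zero_add]
      have swapX : ∑ y, dY y * ∑ x, A (Sum.inl x) (Sum.inr (Sum.inl y)) * dX x
          = ∑ x, dX x * ∑ y, A (Sum.inl x) (Sum.inr (Sum.inl y)) * dY y := by
        simp_rw [Finset.mul_sum]
        rw [Finset.sum_comm]
        exact Finset.sum_congr rfl fun _ _ => Finset.sum_congr rfl fun _ _ => by ring
      have swapL : ∑ y, dY y * ∑ l, A (Sum.inr (Sum.inr l)) (Sum.inr (Sum.inl y)) * dL l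
          = ∑ l, dL l * ∑ y, A (Sum.inr (Sum.inr l)) (Sum.inr (Sum.inl y)) * dY y := by
        simp_rw [Finset.mul_sum]
        rw [Finset.sum_comm]
        exact Finset.sum_congr rfl fun _ _ => Finset.sum_congr rfl fun _ _ => by ring
      simp only [mul_add, Finset.sum_add_distrib, swapX, swapL]
      ring
    rw [hμ, expand, mul_add, ← mul_assoc, inv_mul_cancel₀ hp2, one_mul]
  -- injectivity of B
  have hBinj : ∀ u : Y → ZMod p, B.mulVec u = 0 → u = 0 := by
    intro u hu
    have h1 : C.mulVec (B.mulVec u) = u := by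
      rw [Matrix.mulVec_mulVec, hCB, Matrix.one_mulVec]
    rw [hu, Matrix.mulVec_zero] at h1
    exact h1.symm
  have hiff : ∀ dY dY' : Y → ZMod p, B.mulVec (dY' - dY) = 0 ↔ dY' = dY := by
    intro dY dY'
    constructor
    · intro h; exact sub_eq_zero.mp (hBinj _ h)
    · intro h; rw [h, sub_self, Matrix.mulVec_zero]
  -- the constant
  set c : ℝ := (p : ℝ) ^ (-((Fintype.card L : ℝ) + (Fintype.card X : ℝ)) / 2) with hc
  have hppos : (0:ℝ) < p := Nat.cast_pos.mpr (Fact.out (p := p.Prime)).pos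
  have hcc : (c * c : ℝ) = ((p:ℝ) ^ (Fintype.card (X ⊕ L)))⁻¹ := by
    rw [hc, ← Real.rpow_add hppos]
    have h1 : -((Fintype.card L : ℝ) + (Fintype.card X : ℝ)) / 2 +
        -((Fintype.card L : ℝ) + (Fintype.card X : ℝ)) / 2
        = -((Fintype.card (X ⊕ L) : ℕ) : ℝ) := by
      simp [Fintype.card_sum]
      ring
    rw [h1, Real.rpow_neg hppos.le, Real.rpow_natCast]
  have hc2 : ((c:ℂ) * (c:ℂ)) * (p:ℂ) ^ (Fintype.card (X ⊕ L)) = 1 := by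
    rw [← Complex.ofReal_mul, hcc]
    have hpn : ((p:ℝ) ^ (Fintype.card (X ⊕ L))) ≠ 0 := by positivity
    push_cast
    field_simp
    exact div_self (pow_ne_zero _ (by exact_mod_cast hppos.ne'))
  -- T in terms of the character
  have Tform : ∀ (ψ : EuclideanSpace ℂ (Y → ZMod p)) (g : X ⊕ L → ZMod p),
      T ψ g = (c:ℂ) * ∑ dY : Y → ZMod p,
        e p (μ (fun x => g (Sum.inl x)) dY (fun l => g (Sum.inr l))) * ψ dY := by
    intro ψ g
    rw [hT]
    congr 1
    exact Finset.sum_congr rfl fun dY _ => by rw [e_apply]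
  have helim : ∀ g : X ⊕ L → ZMod p,
      Sum.elim (fun x => g (Sum.inl x)) (fun l => g (Sum.inr l)) = g := by
    intro g; funext i; cases i <;> rfl
  have hdiff : ∀ (g : X ⊕ L → ZMod p) (dY dY' : Y → ZMod p),
      μ (fun x => g (Sum.inl x)) dY' (fun l => g (Sum.inr l)) -
      μ (fun x => g (Sum.inl x)) dY (fun l => g (Sum.inr l)) =
      g ⬝ᵥ B.mulVec (dY' - dY) + (q dY' - q dY) := by
    intro g dY dY'
    rw [key, key, helim, Matrix.mulVec_sub, dotProduct_sub]
    ring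
  -- main unitarity computation
  have main : ∀ ψ φ : EuclideanSpace ℂ (Y → ZMod p),
      (inner ℂ (T ψ) (T φ) : ℂ) = inner ℂ ψ φ := by
    intro ψ φ
    rw [PiLp.inner_apply, PiLp.inner_apply]
    simp only [RCLike.inner_apply']
    have step1 : ∀ g : X ⊕ L → ZMod p,
        (starRingEnd ℂ) (T ψ g) * T φ g
        = ∑ dY : Y → ZMod p, ∑ dY' : Y → ZMod p,
            ((c:ℂ) * (c:ℂ)) *
            (e p (g ⬝ᵥ B.mulVec (dY' - dY) + (q dY' - q dY))
            * ((starRingEnd ℂ) (ψ dY) * φ dY')) := by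
      intro g
      rw [Tform, Tform, _root_.map_mul, Complex.conj_ofReal, map_sum]
      rw [mul_mul_mul_comm, Finset.sum_mul_sum]
      rw [Finset.mul_sum]
      refine Finset.sum_congr rfl fun dY _ => ?_
      rw [Finset.mul_sum]
      refine Finset.sum_congr rfl fun dY' _ => ?_
      rw [_root_.map_mul, e_conj, ← hdiff g dY dY']
      have harr : μ (fun x => g (Sum.inl x)) dY' (fun l => g (Sum.inr l)) -
          μ (fun x => g (Sum.inl x)) dY (fun l => g (Sum.inr l)) =
          -(μ (fun x => g (Sum.inl x)) dY (fun l => g (Sum.inr l))) +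
          μ (fun x => g (Sum.inl x)) dY' (fun l => g (Sum.inr l)) := by ring
      rw [harr, AddChar.map_add_eq_mul]
      ring
    calc ∑ g : X ⊕ L → ZMod p, (starRingEnd ℂ) (T ψ g) * T φ g
        = ∑ dY : Y → ZMod p, ∑ dY' : Y → ZMod p, ∑ g : X ⊕ L → ZMod p,
            ((c:ℂ) * (c:ℂ)) *
            (e p (g ⬝ᵥ B.mulVec (dY' - dY) + (q dY' - q dY))
            * ((starRingEnd ℂ) (ψ dY) * φ dY')) := by
          simp_rw [step1]
          rw [Finset.sum_comm]
          exact Finset.sum_congr rfl fun dY _ => Finset.sum_comm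
      _ = ∑ dY : Y → ZMod p, ∑ dY' : Y → ZMod p,
            ((c:ℂ) * (c:ℂ)) * (e p (q dY' - q dY) *
              ((starRingEnd ℂ) (ψ dY) * φ dY')) *
            (if dY' = dY then ((p:ℂ) ^ Fintype.card (X ⊕ L)) else 0) := by
          refine Finset.sum_congr rfl fun dY _ => Finset.sum_congr rfl fun dY' _ => ?_
          have hs : ∑ g : X ⊕ L → ZMod p, ((c:ℂ)*(c:ℂ)) *
              (e p (g ⬝ᵥ B.mulVec (dY' - dY) + (q dY' - q dY)) *
                ((starRingEnd ℂ) (ψ dY) * φ dY'))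
              = (∑ g : X ⊕ L → ZMod p, e p (g ⬝ᵥ B.mulVec (dY' - dY))) *
                (((c:ℂ)*(c:ℂ)) * (e p (q dY' - q dY) *
                  ((starRingEnd ℂ) (ψ dY) * φ dY'))) := by
            rw [Finset.sum_mul]
            refine Finset.sum_congr rfl fun g _ => ?_
            rw [AddChar.map_add_eq_mul]
            ring
          rw [hs, sum_e_dot,
            show (if B.mulVec (dY' - dY) = 0 then ((p:ℂ) ^ Fintype.card (X ⊕ L)) else 0)
              = (if dY' = dY then ((p:ℂ) ^ Fintype.card (X ⊕ L)) else 0)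
              from if_congr (hiff dY dY') rfl rfl]
          ring
      _ = ∑ dY : Y → ZMod p,
            ((c:ℂ) * (c:ℂ)) * ((starRingEnd ℂ) (ψ dY) * φ dY) *
            ((p:ℂ) ^ Fintype.card (X ⊕ L)) := by
          refine Finset.sum_congr rfl fun dY _ => ?_
          rw [Finset.sum_eq_single dY]
          · simp
          · intro dY' _ hne
            rw [if_neg hne, mul_zero]
          · intro h; exact absurd (Finset.mem_univ dY) h
      _ = ∑ dY : Y → ZMod p, (starRingEnd ℂ) (ψ dY) * φ dY := by
          refine Finset.sum_congr rfl fun dY _ => ?_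
          rw [mul_comm (((c:ℂ) * (c:ℂ))) _, mul_assoc, hc2, mul_one]
  refine ⟨main, ?_⟩
  -- linearity
  have hadd : ∀ ψ φ : EuclideanSpace ℂ (Y → ZMod p), T (ψ + φ) = T ψ + T φ := by
    intro ψ φ; refine PiLp.ext fun g => ?_
    have h1 : (T ψ + T φ) g = T ψ g + T φ g := rfl
    rw [h1, Tform, Tform, Tform]
    have h2 : ∀ dY : Y → ZMod p, (ψ + φ) dY = ψ dY + φ dY := fun _ => rfl
    simp_rw [h2, mul_add, Finset.sum_add_distrib]
    ring
  have hsmul : ∀ (a : ℂ) (ψ : EuclideanSpace ℂ (Y → ZMod p)), T (a • ψ) = a • T ψ := by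
    intro a ψ; refine PiLp.ext fun g => ?_
    have h1 : (a • T ψ) g = a * T ψ g := rfl
    have h2 : ∀ dY : Y → ZMod p, (a • ψ) dY = a * ψ dY := fun _ => rfl
    rw [h1, Tform, Tform]
    simp only [h2, Finset.mul_sum]
    exact Finset.sum_congr rfl fun dY _ => by ring
  let Tl : EuclideanSpace ℂ (Y → ZMod p) →ₗ[ℂ] EuclideanSpace ℂ (X ⊕ L → ZMod p) :=
    { toFun := T, map_add' := hadd, map_smul' := hsmul }
  have hinj : Function.Injective T := by
    intro ψ φ h
    have h0 : T (ψ - φ) = 0 := by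
      have := Tl.map_sub ψ φ
      simp only [Tl, LinearMap.coe_mk, AddHom.coe_mk] at this
      rw [this, h, sub_self]
    have h1 : (inner ℂ (ψ - φ) (ψ - φ) : ℂ) = 0 := by
      rw [← main (ψ - φ) (ψ - φ), h0, inner_zero_left]
    exact sub_eq_zero.mp (inner_self_eq_zero.mp h1)
  have hdim : Module.finrank ℂ (EuclideanSpace ℂ (Y → ZMod p)) =
      Module.finrank ℂ (EuclideanSpace ℂ (X ⊕ L → ZMod p)) := by
    rw [finrank_euclideanSpace, finrank_euclideanSpace]
    simp [Fintype.card_fun, Fintype.card_sum, ZMod.card, hcard]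
  have hsurj : Function.Surjective T := by
    have := (LinearMap.injective_iff_surjective_of_finrank_eq_finrank hdim).mp
      (show Function.Injective Tl from hinj)
    exact this
  exact ⟨hinj, hsurj⟩
end
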